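/- For each 1 ≤ k ≤ n, the function σ : Symₙ(ℝ) → ℝ that sends a real symmetric n×n matrix A to the sum λ₁(A) + ⋯ + λ_k(A) of its k smallest eigenvalues (counted with multiplicity) is concave on Symₙ(ℝ). -/

import Mathlib

open Matrix Polynomial Finset

section AuxLemmas

variable {n : ℕ}

lemma aux_sum_indicator (n k : ℕ) (hkn : k ≤ n) :
    ∑ i : Fin n, (if (i : ℕ) < k then (1 : ℝ) else 0) = k := by
  rw [Fin.sum_univ_eq_sum_range (fun i => if i < k then (1:ℝ) else 0) n]
  rw [Finset.sum_ite, Finset.sum_const_zero, add_zero]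
  have : Finset.filter (fun i => i < k) (Finset.range n) = Finset.range k := by
    ext i; simp; omega
  simp [this]

lemma aux_psd_diag {Q : Matrix (Fin n) (Fin n) ℝ} (hQ : Q.PosSemidef) (j : Fin n) :
    0 ≤ Q j j := by
  have := hQ.diag_nonneg (i := j)
  simpa [dotProduct, Matrix.mulVec, Pi.single_apply, Finset.sum_ite_eq] using this

lemma aux_charpoly_diagonal (d : Fin n → ℝ) :
    (Matrix.diagonal d).charpoly = ∏ i, (X - C (d i)) := by
  have h : charmatrix (Matrix.diagonal d) = Matrix.diagonal (fun i => X - C (d i)) := by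
    ext i j
    by_cases hij : i = j
    · subst hij; simp
    · simp [charmatrix_apply_ne _ _ _ hij, Matrix.diagonal_apply_ne _ hij,
        Matrix.diagonal_apply_ne d hij]
  rw [Matrix.charpoly, h, Matrix.det_diagonal]

lemma aux_charpoly_conj (U D : Matrix (Fin n) (Fin n) ℝ) (hU : U * star U = 1) :
    (U * D * star U).charpoly = D.charpoly := by
  have key : charmatrix (U * D * star U) =
      (C : ℝ →+* ℝ[X]).mapMatrix U * charmatrix D * (C : ℝ →+* ℝ[X]).mapMatrix (star U) := by
    unfold charmatrix
    have h1 : (C : ℝ →+* ℝ[X]).mapMatrix U * (C : ℝ →+* ℝ[X]).mapMatrix (star U) = 1 := by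
      rw [← _root_.map_mul, hU, _root_.map_one]
    rw [mul_sub, sub_mul, ← _root_.map_mul, ← _root_.map_mul]
    congr 1
    have hc : Commute (Matrix.scalar (Fin n) (X : ℝ[X])) ((C : ℝ →+* ℝ[X]).mapMatrix (star U)) :=
      Matrix.scalar_commute _ (fun r => Commute.all _ _) _
    rw [mul_assoc, hc.eq, ← mul_assoc, h1, one_mul]
  rw [Matrix.charpoly, Matrix.charpoly, key, Matrix.det_mul, Matrix.det_mul]
  have : ((C : ℝ →+* ℝ[X]).mapMatrix U).det * ((C : ℝ →+* ℝ[X]).mapMatrix (star U)).det = 1 := by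
    rw [← Matrix.det_mul, ← _root_.map_mul, hU, _root_.map_one, Matrix.det_one]
  calc (C.mapMatrix U).det * D.charmatrix.det * (C.mapMatrix (star U)).det
      = D.charmatrix.det * ((C.mapMatrix U).det * (C.mapMatrix (star U)).det) := by ring
    _ = D.charmatrix.det := by rw [this, mul_one]

lemma aux_key_ineq {n k : ℕ} (hk1 : 1 ≤ k) (hkn : k ≤ n) (lam c : Fin n → ℝ)
    (hmono : Monotone lam) (hc0 : ∀ i, 0 ≤ c i) (hc1 : ∀ i, c i ≤ 1)
    (hsum : ∑ i, c i = k) :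
    ∑ i ∈ Finset.univ.filter (fun i : Fin n => (i : ℕ) < k), lam i ≤ ∑ i, c i * lam i := by
  set d : Fin n → ℝ := fun i => if (i : ℕ) < k then 1 else 0 with hd_def
  have hd : ∑ i, d i = k := aux_sum_indicator n k hkn
  set t : ℝ := lam ⟨k - 1, by omega⟩ with ht
  have hnonneg : 0 ≤ ∑ i, (c i - d i) * (lam i - t) := by
    apply Finset.sum_nonneg
    intro i _
    by_cases h : (i : ℕ) < k
    · apply mul_nonneg_of_nonpos_of_nonpos
      · simp [hd_def, h]; linarith [hc1 i]
      · have : i ≤ (⟨k - 1, by omega⟩ : Fin n) := by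
          rw [Fin.le_def]; simp; omega
        linarith [hmono this]
    · apply mul_nonneg
      · simp [hd_def, h]; exact hc0 i
      · have : (⟨k - 1, by omega⟩ : Fin n) ≤ i := by
          rw [Fin.le_def]; simp; omega
        linarith [hmono this]
  have expand : ∑ i, (c i - d i) * (lam i - t) =
      (∑ i, c i * lam i) - (∑ i, d i * lam i) - t * (∑ i, c i) + t * (∑ i, d i) := by
    rw [Finset.mul_sum, Finset.mul_sum, ← Finset.sum_sub_distrib, ← Finset.sum_sub_distrib,
      ← Finset.sum_add_distrib]
    apply Finset.sum_congr rfl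
    intro i _; ring
  rw [expand, hsum, hd] at hnonneg
  have hdlam : ∑ i, d i * lam i
      = ∑ i ∈ Finset.univ.filter (fun i : Fin n => (i : ℕ) < k), lam i := by
    rw [Finset.sum_filter]
    apply Finset.sum_congr rfl
    intro i _
    by_cases h : (i : ℕ) < k <;> simp [hd_def, h]
  rw [hdlam] at hnonneg
  linarith

lemma aux_trace_conj (U M P : Matrix (Fin n) (Fin n) ℝ) :
    (U * M * star U * P).trace = (M * (star U * P * U)).trace := by
  have h1 : U * M * star U * P = U * (M * (star U * P)) := by
    simp only [mul_assoc]
  rw [h1, Matrix.trace_mul_comm U (M * (star U * P))]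
  simp only [mul_assoc]

lemma aux_spectral {A : Matrix (Fin n) (Fin n) ℝ} (hA : A.IsHermitian) :
    A = (hA.eigenvectorUnitary : Matrix (Fin n) (Fin n) ℝ) * diagonal hA.eigenvalues
        * star (hA.eigenvectorUnitary : Matrix (Fin n) (Fin n) ℝ) := by
  have := hA.spectral_theorem
  rwa [RCLike.ofReal_real_eq_id, Function.id_comp] at this

lemma aux_star_conj_diag {A : Matrix (Fin n) (Fin n) ℝ} (hA : A.IsHermitian)
    (d : Fin n → ℝ) :
    star (hA.eigenvectorUnitary : Matrix (Fin n) (Fin n) ℝ)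
      * ((hA.eigenvectorUnitary : Matrix (Fin n) (Fin n) ℝ) * diagonal d
        * star (hA.eigenvectorUnitary : Matrix (Fin n) (Fin n) ℝ))
      * (hA.eigenvectorUnitary : Matrix (Fin n) (Fin n) ℝ) = diagonal d := by
  set U : Matrix (Fin n) (Fin n) ℝ := (hA.eigenvectorUnitary : Matrix (Fin n) (Fin n) ℝ)
  have h1 : star U * U = 1 := Unitary.coe_star_mul_self hA.eigenvectorUnitary
  simp only [← mul_assoc]
  rw [h1, one_mul, mul_assoc, h1, mul_one]

lemma aux_kyfan {k : ℕ} (hk1 : 1 ≤ k) (hkn : k ≤ n)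
    (A P : Matrix (Fin n) (Fin n) ℝ) (hA : A.IsHermitian)
    (hP : P.PosSemidef) (hP1 : ((1 : Matrix (Fin n) (Fin n) ℝ) - P).PosSemidef)
    (htr : P.trace = k) :
    ∑ i ∈ Finset.univ.filter (fun i : Fin n => (i : ℕ) < k),
      (hA.eigenvalues ∘ Tuple.sort hA.eigenvalues) i ≤ (A * P).trace := by
  set U : Matrix (Fin n) (Fin n) ℝ := (hA.eigenvectorUnitary : Matrix (Fin n) (Fin n) ℝ) with hU
  have h1 : star U * U = 1 := Unitary.coe_star_mul_self hA.eigenvectorUnitary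
  have h2 : U * star U = 1 := Unitary.coe_mul_star_self hA.eigenvectorUnitary
  set μ : Fin n → ℝ := hA.eigenvalues with hμ
  set Q : Matrix (Fin n) (Fin n) ℝ := star U * P * U with hQ
  have hQpsd : Q.PosSemidef := by
    have := hP.conjTranspose_mul_mul_same U
    rwa [← Matrix.star_eq_conjTranspose] at this
  have hQ1 : (1 : Matrix (Fin n) (Fin n) ℝ) - Q = star U * (1 - P) * U := by
    rw [mul_sub, sub_mul, mul_one, h1]
  have hQ1psd : ((1 : Matrix (Fin n) (Fin n) ℝ) - Q).PosSemidef := by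
    rw [hQ1]
    have := hP1.conjTranspose_mul_mul_same U
    rwa [← Matrix.star_eq_conjTranspose] at this
  have hc0 : ∀ j, 0 ≤ Q j j := fun j => aux_psd_diag hQpsd j
  have hc1 : ∀ j, Q j j ≤ 1 := by
    intro j
    have := aux_psd_diag hQ1psd j
    rw [Matrix.sub_apply, Matrix.one_apply_eq] at this
    linarith
  have hsum : ∑ j, Q j j = k := by
    have : Q.trace = P.trace := by
      rw [hQ, mul_assoc, Matrix.trace_mul_comm (star U) (P * U), mul_assoc, h2, mul_one]
    have h3 : ∑ j, Q j j = Q.trace := rfl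
    rw [h3, this, htr]
  have htrace : (A * P).trace = ∑ j, μ j * Q j j := by
    conv_lhs => rw [aux_spectral hA]
    rw [aux_trace_conj]
    rw [show star U * P * U = Q from rfl]
    rw [Matrix.trace]
    simp [Matrix.diag, Matrix.diagonal_mul, hμ]
  rw [htrace]
  set s := Tuple.sort hA.eigenvalues with hs
  have := aux_key_ineq hk1 hkn (μ ∘ s) (fun i => Q (s i) (s i))
    (Tuple.monotone_sort hA.eigenvalues)
    (fun i => hc0 (s i)) (fun i => hc1 (s i))
    (by rw [Equiv.sum_comp s (fun j => Q j j)]; exact hsum)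
  refine le_trans this ?_
  rw [← Equiv.sum_comp s (fun j => μ j * Q j j)]
  apply le_of_eq
  apply Finset.sum_congr rfl
  intro i _
  simp [mul_comm]

lemma aux_charpoly_eig {A : Matrix (Fin n) (Fin n) ℝ} (hA : A.IsHermitian) :
    A.charpoly = ∏ i, (X - C ((hA.eigenvalues ∘ Tuple.sort hA.eigenvalues) i)) := by
  conv_lhs => rw [aux_spectral hA]
  rw [aux_charpoly_conj _ _ (Unitary.coe_mul_star_self hA.eigenvectorUnitary),
    aux_charpoly_diagonal]
  exact (Equiv.prod_comp (Tuple.sort hA.eigenvalues)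
    (fun i => X - C (hA.eigenvalues i))).symm

/-- the projection onto the eigenspaces of the `k` smallest eigenvalues -/
noncomputable def auxP {A : Matrix (Fin n) (Fin n) ℝ} (hA : A.IsHermitian) (k : ℕ) :
    Matrix (Fin n) (Fin n) ℝ :=
  (hA.eigenvectorUnitary : Matrix (Fin n) (Fin n) ℝ)
    * diagonal (fun i => if (((Tuple.sort hA.eigenvalues).symm i : Fin n) : ℕ) < k
        then (1:ℝ) else 0)
    * star (hA.eigenvectorUnitary : Matrix (Fin n) (Fin n) ℝ)

lemma auxP_psd {A : Matrix (Fin n) (Fin n) ℝ} (hA : A.IsHermitian) (k : ℕ) :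
    (auxP hA k).PosSemidef := by
  have hd : (0 : Fin n → ℝ) ≤ fun i =>
      if (((Tuple.sort hA.eigenvalues).symm i : Fin n) : ℕ) < k then (1:ℝ) else 0 := by
    intro i; dsimp; split <;> norm_num
  have := (Matrix.PosSemidef.diagonal hd).mul_mul_conjTranspose_same
    (hA.eigenvectorUnitary : Matrix (Fin n) (Fin n) ℝ)
  rwa [← Matrix.star_eq_conjTranspose] at this

lemma auxP_one_sub_psd {A : Matrix (Fin n) (Fin n) ℝ} (hA : A.IsHermitian) (k : ℕ) :
    ((1 : Matrix (Fin n) (Fin n) ℝ) - auxP hA k).PosSemidef := by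
  set U : Matrix (Fin n) (Fin n) ℝ := (hA.eigenvectorUnitary : Matrix (Fin n) (Fin n) ℝ)
  have h2 : U * star U = 1 := Unitary.coe_mul_star_self hA.eigenvectorUnitary
  set d : Fin n → ℝ := fun i =>
    if (((Tuple.sort hA.eigenvalues).symm i : Fin n) : ℕ) < k then (1:ℝ) else 0 with hd_def
  have key : (1 : Matrix (Fin n) (Fin n) ℝ) - auxP hA k
      = U * diagonal (fun i => 1 - d i) * star U := by
    have : diagonal (fun i => 1 - d i) = 1 - diagonal d := by
      rw [← Matrix.diagonal_one, ← Matrix.diagonal_sub]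
    rw [this, mul_sub, sub_mul, mul_one, h2]
    rfl
  rw [key]
  have hd : (0 : Fin n → ℝ) ≤ fun i => 1 - d i := by
    intro i
    by_cases h : (((Tuple.sort hA.eigenvalues).symm i : Fin n) : ℕ) < k <;>
      simp [hd_def, h]
  have := (Matrix.PosSemidef.diagonal hd).mul_mul_conjTranspose_same U
  rwa [← Matrix.star_eq_conjTranspose] at this

lemma auxP_trace {A : Matrix (Fin n) (Fin n) ℝ} (hA : A.IsHermitian) (k : ℕ) (hkn : k ≤ n) :
    (auxP hA k).trace = k := by
  set U : Matrix (Fin n) (Fin n) ℝ := (hA.eigenvectorUnitary : Matrix (Fin n) (Fin n) ℝ)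
  have h1 : star U * U = 1 := Unitary.coe_star_mul_self hA.eigenvectorUnitary
  set s := Tuple.sort hA.eigenvalues with hs
  set d : Fin n → ℝ := fun i => if ((s.symm i : Fin n) : ℕ) < k then (1:ℝ) else 0 with hd_def
  have : (auxP hA k).trace = (diagonal d).trace := by
    show (U * diagonal d * star U).trace = _
    rw [mul_assoc, Matrix.trace_mul_comm U (diagonal d * star U), mul_assoc, h1, mul_one]
  rw [this, Matrix.trace_diagonal]
  rw [← Equiv.sum_comp s d]
  have : ∀ i, d (s i) = if (i : ℕ) < k then (1:ℝ) else 0 := by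
    intro i; simp [hd_def]
  simp_rw [this]
  exact aux_sum_indicator n k hkn

lemma auxP_trace_mul {A : Matrix (Fin n) (Fin n) ℝ} (hA : A.IsHermitian) (k : ℕ) :
    (A * auxP hA k).trace = ∑ i ∈ Finset.univ.filter (fun i : Fin n => (i : ℕ) < k),
      (hA.eigenvalues ∘ Tuple.sort hA.eigenvalues) i := by
  set U : Matrix (Fin n) (Fin n) ℝ := (hA.eigenvectorUnitary : Matrix (Fin n) (Fin n) ℝ)
  set s := Tuple.sort hA.eigenvalues with hs
  set d : Fin n → ℝ := fun i => if ((s.symm i : Fin n) : ℕ) < k then (1:ℝ) else 0 with hd_def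
  have hrw : A * auxP hA k = U * diagonal hA.eigenvalues * star U * auxP hA k := by
    rw [← aux_spectral hA]
  have h0 : (A * auxP hA k).trace = (diagonal hA.eigenvalues * diagonal d).trace := by
    rw [hrw, aux_trace_conj]
    rw [show star U * auxP hA k * U = diagonal d from aux_star_conj_diag hA d]
  rw [h0, Matrix.diagonal_mul_diagonal, Matrix.trace_diagonal]
  rw [← Equiv.sum_comp s (fun i => hA.eigenvalues i * d i)]
  rw [Finset.sum_filter]
  apply Finset.sum_congr rfl
  intro i _
  by_cases h : (i : ℕ) < k <;> simp [hd_def, h]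

lemma aux_isHermitian_of_isSymm {A : Matrix (Fin n) (Fin n) ℝ} (hA : A.IsSymm) :
    A.IsHermitian := by
  rw [Matrix.IsHermitian, conjTranspose_eq_transpose_of_trivial]
  exact hA

end AuxLemmas


/-- For each `1 ≤ k ≤ n`, the function `σ` sending a real symmetric `n × n`
matrix `A` to the sum of its `k` smallest eigenvalues (counted with multiplicity) is
concave on the set of symmetric matrices.  The function `σ` is pinned down by the
hypothesis `hσ`: whenever `lam : Fin n → ℝ` lists the eigenvalues of `A` in increasing
order with multiplicity (equivalently, `lam` is monotone and the characteristic
polynomial of `A` factors as `∏ i, (X - C (lam i))`), we have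
`σ A = ∑_{i < k} lam i`. -/
theorem sum_smallest_eigenvalues_concave (n k : ℕ) (hk1 : 1 ≤ k) (hkn : k ≤ n)
    (σ : Matrix (Fin n) (Fin n) ℝ → ℝ)
    (hσ : ∀ (A : Matrix (Fin n) (Fin n) ℝ) (lam : Fin n → ℝ), Monotone lam →
      A.charpoly = ∏ i, (Polynomial.X - Polynomial.C (lam i)) →
      σ A = ∑ i ∈ Finset.univ.filter (fun i : Fin n => (i : ℕ) < k), lam i) :
    ConcaveOn ℝ {A : Matrix (Fin n) (Fin n) ℝ | A.IsSymm} σ := by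
  constructor
  · intro x hx y hy a b _ _ _
    exact (Matrix.IsSymm.smul hx a).add (Matrix.IsSymm.smul hy b)
  · intro A hA B hB a b ha hb hab
    simp only [Set.mem_setOf_eq] at hA hB
    have hAH : A.IsHermitian := aux_isHermitian_of_isSymm hA
    have hBH : B.IsHermitian := aux_isHermitian_of_isSymm hB
    have hCH : (a • A + b • B).IsHermitian :=
      aux_isHermitian_of_isSymm ((Matrix.IsSymm.smul hA a).add (Matrix.IsSymm.smul hB b))
    set P : Matrix (Fin n) (Fin n) ℝ := auxP hCH k with hP
    have hσA : σ A = ∑ i ∈ Finset.univ.filter (fun i : Fin n => (i : ℕ) < k),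
        (hAH.eigenvalues ∘ Tuple.sort hAH.eigenvalues) i :=
      hσ A _ (Tuple.monotone_sort _) (aux_charpoly_eig hAH)
    have hσB : σ B = ∑ i ∈ Finset.univ.filter (fun i : Fin n => (i : ℕ) < k),
        (hBH.eigenvalues ∘ Tuple.sort hBH.eigenvalues) i :=
      hσ B _ (Tuple.monotone_sort _) (aux_charpoly_eig hBH)
    have hσC : σ (a • A + b • B) = ((a • A + b • B) * P).trace := by
      rw [hσ (a • A + b • B) _ (Tuple.monotone_sort _) (aux_charpoly_eig hCH),
        hP, auxP_trace_mul]
    have hA_le : σ A ≤ (A * P).trace := by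
      rw [hσA]
      exact aux_kyfan hk1 hkn A P hAH (auxP_psd hCH k) (auxP_one_sub_psd hCH k)
        (auxP_trace hCH k hkn)
    have hB_le : σ B ≤ (B * P).trace := by
      rw [hσB]
      exact aux_kyfan hk1 hkn B P hBH (auxP_psd hCH k) (auxP_one_sub_psd hCH k)
        (auxP_trace hCH k hkn)
    have expand : ((a • A + b • B) * P).trace = a * (A * P).trace + b * (B * P).trace := by
      rw [Matrix.add_mul, Matrix.smul_mul, Matrix.smul_mul, Matrix.trace_add,
        Matrix.trace_smul, Matrix.trace_smul]
      simp [smul_eq_mul]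
    rw [smul_eq_mul, smul_eq_mul, hσC, expand]
    exact add_le_add (mul_le_mul_of_nonneg_left hA_le ha) (mul_le_mul_of_nonneg_left hB_le hb)
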